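/- For every δ with 0 < δ < π/4, the function ε₀(t) = (t − δ)³ · (12(π − 3δ − t)·cos δ − (π − 4δ)(2π − 5δ − 3t)·sin δ) / (3(π − 4δ)³) satisfies ε₀(t) ≥ 0 for all t ∈ [δ, π/2 − δ]. -/
import Mathlib


open Real

/-- The explicit polynomial middle piece of the profile-modification function. -/
noncomputable def eps0 (δ t : ℝ) : ℝ :=
  (t - δ) ^ 3 *
    (12 * (π - 3 * δ - t) * Real.cos δ - (π - 4 * δ) * (2 * π - 5 * δ - 3 * t) * Real.sin δ) /
    (3 * (π - 4 * δ) ^ 3)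

lemma bracket_nonneg (δ t : ℝ) (hδ : 0 < δ) (hδ' : δ < π / 4) (ht1 : δ ≤ t)
    (ht2 : t ≤ π / 2 - δ) :
    0 ≤ 12 * (π - 3 * δ - t) * Real.cos δ - (π - 4 * δ) * (2 * π - 5 * δ - 3 * t) * Real.sin δ := by
  have hπ1 : (3.14 : ℝ) < π := by linarith [Real.pi_gt_d6]
  have hπ2 : π < 3.15 := by linarith [Real.pi_lt_d2]
  have hδπ : δ < π / 2 := by linarith
  have hc : Real.sqrt 2 / 2 ≤ Real.cos δ := by
    rw [← Real.cos_pi_div_four]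
    exact Real.cos_le_cos_of_nonneg_of_le_pi (by positivity) (by linarith) hδ'.le
  have hsqrt : (1.414 : ℝ) ≤ Real.sqrt 2 := by
    nlinarith [Real.sq_sqrt (by norm_num : (2:ℝ) ≥ 0), Real.sqrt_nonneg 2]
  have hc' : (8.4 : ℝ) ≤ 12 * Real.cos δ := by nlinarith
  have hs0 : 0 ≤ Real.sin δ := Real.sin_nonneg_of_nonneg_of_le_pi hδ.le (by linarith)
  have hs : Real.sin δ ≤ δ := le_of_lt (Real.sin_lt hδ)
  have h4 : 0 ≤ π - 4 * δ := by linarith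
  have hsd : (π - 4 * δ) * Real.sin δ ≤ (π - 4 * δ) * δ :=
    mul_le_mul_of_nonneg_left hs h4
  -- slope nonnegativity: 3(π-4δ) sin δ ≤ 12 cos δ
  have hA : 0 ≤ 12 * Real.cos δ - 3 * ((π - 4 * δ) * Real.sin δ) := by
    nlinarith [sq_nonneg (π - 8 * δ)]
  have hB : 0 ≤ 12 * Real.cos δ - (π - 4 * δ) * Real.sin δ := by
    nlinarith [sq_nonneg (π - 8 * δ)]
  have h1 : 0 ≤ π / 2 - δ - t := by linarith
  have h2 : 0 ≤ π / 2 - 2 * δ := by linarith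
  nlinarith [mul_nonneg h1 hA, mul_nonneg h2 hB]

/-- For `0 < δ < π/4`, the function `ε₀` is nonnegative on `[δ, π/2 - δ]`. -/
theorem stmt_9 (δ : ℝ) (hδ : 0 < δ) (hδ' : δ < π / 4) :
    ∀ t ∈ Set.Icc δ (π / 2 - δ), 0 ≤ eps0 δ t := by
  intro t ht
  obtain ⟨ht1, ht2⟩ := ht
  unfold eps0
  apply div_nonneg
  · apply mul_nonneg
    · exact pow_nonneg (by linarith) 3
    · exact bracket_nonneg δ t hδ hδ' ht1 ht2
  · have : 0 < π - 4 * δ := by linarith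
    positivity
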